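/- arXiv:2106.08100 — 3 statements merged into one kernel-verified Lean document; each statement's English description precedes it below -/
import Mathlib

section
/- Uniqueness of the β-system solution: for a given degree sequence d = (d_1,…,d_n), there is at most one β* ∈ ℝ^n satisfying ∑_{W ∋ j} λ_W(β*) = d_j for all j ∈ [n], where the sum is over r-subsets W of [n] containing j and λ_W(β) = exp(∑_{k∈W} β_k)/(1+exp(∑_{k∈W} β_k)). -/
noncomputable def lamW {n : ℕ} (β : Fin n → ℝ) (W : Finset (Fin n)) : ℝ :=
  Real.exp (∑ k ∈ W, β k) / (1 + Real.exp (∑ k ∈ W, β k))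

lemma sig_strictMono : StrictMono (fun x : ℝ => Real.exp x / (1 + Real.exp x)) := by
  intro a b hab
  have ha := Real.exp_pos a
  have hb := Real.exp_pos b
  rw [div_lt_div_iff₀ (by linarith) (by linarith)]
  have h2 : Real.exp a < Real.exp b := Real.exp_lt_exp.2 hab
  nlinarith

lemma term_nonneg (a b : ℝ) :
    0 ≤ (a - b) * (Real.exp a / (1 + Real.exp a) - Real.exp b / (1 + Real.exp b)) := by
  rcases lt_trichotomy a b with hab | hab | hab
  · have := sig_strictMono hab
    nlinarith
  · simp [hab]
  · have := sig_strictMono hab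
    nlinarith

lemma term_eq_zero (a b : ℝ)
    (hz : (a - b) * (Real.exp a / (1 + Real.exp a) - Real.exp b / (1 + Real.exp b)) = 0) :
    a = b := by
  by_contra hne
  rcases lt_or_gt_of_ne hne with hab | hab
  · have := sig_strictMono hab
    nlinarith
  · have := sig_strictMono hab
    nlinarith

theorem stmt13 (n r : ℕ) (hr : 2 ≤ r) (hrn : r < n) (d : Fin n → ℝ)
    (β β' : Fin n → ℝ)
    (h : ∀ j : Fin n,
      ∑ W ∈ (Finset.powersetCard r (Finset.univ : Finset (Fin n))).filter (fun W => j ∈ W),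
        lamW β W = d j)
    (h' : ∀ j : Fin n,
      ∑ W ∈ (Finset.powersetCard r (Finset.univ : Finset (Fin n))).filter (fun W => j ∈ W),
        lamW β' W = d j) :
    β = β' := by
  set γ : Fin n → ℝ := fun j => β j - β' j with hγ
  set P := Finset.powersetCard r (Finset.univ : Finset (Fin n)) with hP
  set c : Finset (Fin n) → ℝ := fun W => lamW β W - lamW β' W with hc
  -- swap the order of summation
  have swap : ∑ W ∈ P, (∑ k ∈ W, γ k) * c W
      = ∑ k : Fin n, ∑ W ∈ P.filter (fun W => k ∈ W), γ k * c W := by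
    have step1 : ∀ W ∈ P, (∑ k ∈ W, γ k) * c W
        = ∑ k : Fin n, if k ∈ W then γ k * c W else 0 := by
      intro W _
      rw [Finset.sum_ite_mem, Finset.univ_inter, Finset.sum_mul]
    rw [Finset.sum_congr rfl step1, Finset.sum_comm]
    refine Finset.sum_congr rfl fun k _ => ?_
    rw [Finset.sum_filter]
  have key : ∑ W ∈ P, (∑ k ∈ W, γ k) * c W = 0 := by
    rw [swap]
    refine Finset.sum_eq_zero fun k _ => ?_
    rw [← Finset.mul_sum]
    have : ∑ W ∈ P.filter (fun W => k ∈ W), c W = 0 := by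
      simp only [hc, Finset.sum_sub_distrib, h k, h' k, sub_self]
    rw [this, mul_zero]
  -- each term is nonneg, hence each term is zero
  have hterm : ∀ W ∈ P, (∑ k ∈ W, γ k) * c W = 0 := by
    rw [Finset.sum_eq_zero_iff_of_nonneg] at key
    · exact key
    · intro W _
      have : (∑ k ∈ W, γ k) = (∑ k ∈ W, β k) - (∑ k ∈ W, β' k) := by
        simp [hγ, Finset.sum_sub_distrib]
      rw [this]
      exact term_nonneg _ _
  -- hence all r-subset sums of γ vanish
  have hsum0 : ∀ W ∈ P, ∑ k ∈ W, γ k = 0 := by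
    intro W hW
    have h1 := hterm W hW
    have h2 : (∑ k ∈ W, γ k) = (∑ k ∈ W, β k) - (∑ k ∈ W, β' k) := by
      simp [hγ, Finset.sum_sub_distrib]
    rw [h2] at h1 ⊢
    have := term_eq_zero _ _ h1
    rw [this, sub_self]
  -- γ is constant
  have hconst : ∀ i j : Fin n, γ i = γ j := by
    intro i j
    by_cases hij : i = j
    · rw [hij]
    · have hcard : r - 1 ≤ ((Finset.univ : Finset (Fin n)) \ {i, j}).card := by
        rw [Finset.card_sdiff_of_subset (by simp)]
        have : ({i, j} : Finset (Fin n)).card = 2 := by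
          rw [Finset.card_insert_of_notMem (by simpa using hij), Finset.card_singleton]
        rw [this, Finset.card_univ, Fintype.card_fin]
        omega
      obtain ⟨A, hAsub, hAcard⟩ := Finset.exists_subset_card_eq hcard
      have hiA : i ∉ A := fun hiA => by
        have := hAsub hiA; simp at this
      have hjA : j ∉ A := fun hjA => by
        have := hAsub hjA; simp at this
      have hWi : insert i A ∈ P := by
        rw [hP, Finset.mem_powersetCard]
        refine ⟨Finset.subset_univ _, ?_⟩
        rw [Finset.card_insert_of_notMem hiA, hAcard]
        omega
      have hWj : insert j A ∈ P := by
        rw [hP, Finset.mem_powersetCard]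
        refine ⟨Finset.subset_univ _, ?_⟩
        rw [Finset.card_insert_of_notMem hjA, hAcard]
        omega
      have e1 := hsum0 _ hWi
      have e2 := hsum0 _ hWj
      rw [Finset.sum_insert hiA] at e1
      rw [Finset.sum_insert hjA] at e2
      linarith
  -- conclude γ = 0
  have hzero : ∀ j : Fin n, γ j = 0 := by
    intro j
    have hcard : r ≤ (Finset.univ : Finset (Fin n)).card := by
      rw [Finset.card_univ, Fintype.card_fin]; omega
    obtain ⟨W, _, hWcard⟩ := Finset.exists_subset_card_eq hcard
    have hWP : W ∈ P := by
      rw [hP, Finset.mem_powersetCard]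
      exact ⟨Finset.subset_univ _, hWcard⟩
    have hsum := hsum0 W hWP
    have : ∑ k ∈ W, γ k = (r : ℝ) * γ j := by
      rw [← hWcard]
      rw [Finset.sum_congr rfl (fun k _ => hconst k j)]
      simp [Finset.sum_const, nsmul_eq_mul]
    rw [this] at hsum
    have hr0 : (r : ℝ) ≠ 0 := by
      exact_mod_cast (by omega : r ≠ 0)
    exact (mul_eq_zero.1 hsum).resolve_left hr0
  funext j
  have hj := hzero j
  simp only [hγ] at hj
  linarith
end

section
/- Stationarity of entropy at the β-system solutions: if β′ and β″ both satisfy ∑_{W ∋ j} λ_W(β) = d_j for all j, and S(y) = ∑_{W∈S_r(n)} [ξ_W(y) log(1/ξ_W(y)) + (1−ξ_W(y)) log(1/(1−ξ_W(y)))] with ξ_W(y) = (1−y)λ_W(β′) + y λ_W(β″), then S′(0) = 0 and S′(1) = 0. -/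
lemma lamW_pos {n : ℕ} (β : Fin n → ℝ) (W : Finset (Fin n)) : 0 < lamW β W := by
  unfold lamW
  positivity

lemma lamW_lt_one {n : ℕ} (β : Fin n → ℝ) (W : Finset (Fin n)) : lamW β W < 1 := by
  unfold lamW
  rw [div_lt_one (by positivity)]
  linarith

lemma log_ratio {n : ℕ} (β : Fin n → ℝ) (W : Finset (Fin n)) :
    Real.log (1 - lamW β W) - Real.log (lamW β W) = -(∑ k ∈ W, β k) := by
  set s := ∑ k ∈ W, β k with hs
  have he : (0:ℝ) < Real.exp s := Real.exp_pos s
  have hd : (0:ℝ) < 1 + Real.exp s := by linarith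
  have h1 : 1 - lamW β W = 1 / (1 + Real.exp s) := by
    unfold lamW; field_simp
    rw [← hs]; ring
  have h2 : Real.log (lamW β W) = s - Real.log (1 + Real.exp s) := by
    unfold lamW
    rw [Real.log_div (ne_of_gt he) (ne_of_gt hd), Real.log_exp]
  rw [h1, h2, one_div, Real.log_inv]
  ring

lemma entropy_hasDerivAt (a b y₀ : ℝ) (h0 : (1-y₀)*a + y₀*b ≠ 0)
    (h1 : 1 - ((1-y₀)*a + y₀*b) ≠ 0) :
    HasDerivAt (fun y : ℝ =>
      ((1-y)*a + y*b) * -Real.log ((1-y)*a + y*b) +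
        (1 - ((1-y)*a + y*b)) * -Real.log (1 - ((1-y)*a + y*b)))
      ((b - a) * (Real.log (1 - ((1-y₀)*a + y₀*b)) - Real.log ((1-y₀)*a + y₀*b))) y₀ := by
  have hu : HasDerivAt (fun y : ℝ => (1-y)*a + y*b) (b - a) y₀ := by
    have : HasDerivAt (fun y : ℝ => (1-y)*a + y*b) ((-1)*a + 1*b) y₀ := by
      exact (((hasDerivAt_id y₀).const_sub 1).mul_const a).add ((hasDerivAt_id y₀).mul_const b)
    convert this using 1; ring
  have hv : HasDerivAt (fun y : ℝ => 1 - ((1-y)*a + y*b)) (-(b - a)) y₀ := hu.const_sub 1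
  have hlog1 := hu.log h0
  have hlog2 := hv.log h1
  have := (hu.fun_mul hlog1.fun_neg).fun_add (hv.fun_mul hlog2.fun_neg)
  refine this.congr_deriv ?_
  have e1 : ((1-y₀)*a + y₀*b) * ((b - a) / ((1-y₀)*a + y₀*b)) = b - a := by field_simp
  have e2 : (1 - ((1-y₀)*a + y₀*b)) * (-(b - a) / (1 - ((1-y₀)*a + y₀*b))) = -(b - a) := by
    field_simp
  linear_combination -e1 - e2

lemma sum_swap_filter {n : ℕ} (P : Finset (Finset (Fin n))) (g : Fin n → Finset (Fin n) → ℝ) :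
    ∑ W ∈ P, ∑ j ∈ W, g j W = ∑ j : Fin n, ∑ W ∈ P.filter (fun W => j ∈ W), g j W := by
  simp_rw [Finset.sum_filter]
  rw [Finset.sum_comm]
  refine Finset.sum_congr rfl fun W _ => ?_
  rw [Finset.sum_ite_mem, Finset.univ_inter]

theorem stmt14 (n r : ℕ) (hr : 1 ≤ r) (hrn : r ≤ n) (d : Fin n → ℝ)
    (β β' : Fin n → ℝ)
    (h : ∀ j : Fin n,
      ∑ W ∈ (Finset.powersetCard r (Finset.univ : Finset (Fin n))).filter (fun W => j ∈ W),
        lamW β W = d j)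
    (h' : ∀ j : Fin n,
      ∑ W ∈ (Finset.powersetCard r (Finset.univ : Finset (Fin n))).filter (fun W => j ∈ W),
        lamW β' W = d j) :
    HasDerivAt (fun y : ℝ =>
      ∑ W ∈ Finset.powersetCard r (Finset.univ : Finset (Fin n)),
        (((1 - y) * lamW β W + y * lamW β' W) * Real.log (1 / ((1 - y) * lamW β W + y * lamW β' W)) +
          (1 - ((1 - y) * lamW β W + y * lamW β' W)) *
            Real.log (1 / (1 - ((1 - y) * lamW β W + y * lamW β' W))))) 0 0 ∧
    HasDerivAt (fun y : ℝ =>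
      ∑ W ∈ Finset.powersetCard r (Finset.univ : Finset (Fin n)),
        (((1 - y) * lamW β W + y * lamW β' W) * Real.log (1 / ((1 - y) * lamW β W + y * lamW β' W)) +
          (1 - ((1 - y) * lamW β W + y * lamW β' W)) *
            Real.log (1 / (1 - ((1 - y) * lamW β W + y * lamW β' W))))) 0 1 := by
  set P := Finset.powersetCard r (Finset.univ : Finset (Fin n)) with hP
  simp only [one_div, Real.log_inv]
  constructor
  · -- at y₀ = 0
    have key : ∀ W ∈ P, HasDerivAt (fun y : ℝ =>
        ((1-y) * lamW β W + y * lamW β' W) * -Real.log ((1-y) * lamW β W + y * lamW β' W) +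
          (1 - ((1-y) * lamW β W + y * lamW β' W)) *
            -Real.log (1 - ((1-y) * lamW β W + y * lamW β' W)))
        ((lamW β' W - lamW β W) * -(∑ k ∈ W, β k)) 0 := by
      intro W _
      have e0 : (1-(0:ℝ)) * lamW β W + (0:ℝ) * lamW β' W = lamW β W := by ring
      have h0 : (1-(0:ℝ)) * lamW β W + (0:ℝ) * lamW β' W ≠ 0 := by
        rw [e0]; exact ne_of_gt (lamW_pos β W)
      have h1 : 1 - ((1-(0:ℝ)) * lamW β W + (0:ℝ) * lamW β' W) ≠ 0 := by
        rw [e0]; have := lamW_lt_one β W; linarith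
      have := entropy_hasDerivAt (lamW β W) (lamW β' W) 0 h0 h1
      rw [e0] at this
      rwa [log_ratio β W] at this
    have hsum := HasDerivAt.fun_sum key
    have hzero : ∑ W ∈ P, (lamW β' W - lamW β W) * -(∑ k ∈ W, β k) = 0 := by
      have : ∀ W ∈ P, (lamW β' W - lamW β W) * -(∑ k ∈ W, β k)
          = ∑ j ∈ W, -((lamW β' W - lamW β W) * β j) := by
        intro W _
        rw [mul_neg, Finset.mul_sum, ← Finset.sum_neg_distrib]
      rw [Finset.sum_congr rfl this, sum_swap_filter]
      apply Finset.sum_eq_zero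
      intro j _
      simp_rw [sub_mul, neg_sub]
      rw [Finset.sum_sub_distrib, ← Finset.sum_mul, ← Finset.sum_mul, h j, h' j, sub_self]
    rwa [hzero] at hsum
  · -- at y₀ = 1
    have key : ∀ W ∈ P, HasDerivAt (fun y : ℝ =>
        ((1-y) * lamW β W + y * lamW β' W) * -Real.log ((1-y) * lamW β W + y * lamW β' W) +
          (1 - ((1-y) * lamW β W + y * lamW β' W)) *
            -Real.log (1 - ((1-y) * lamW β W + y * lamW β' W)))
        ((lamW β' W - lamW β W) * -(∑ k ∈ W, β' k)) 1 := by
      intro W _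
      have e0 : (1-(1:ℝ)) * lamW β W + (1:ℝ) * lamW β' W = lamW β' W := by ring
      have h0 : (1-(1:ℝ)) * lamW β W + (1:ℝ) * lamW β' W ≠ 0 := by
        rw [e0]; exact ne_of_gt (lamW_pos β' W)
      have h1 : 1 - ((1-(1:ℝ)) * lamW β W + (1:ℝ) * lamW β' W) ≠ 0 := by
        rw [e0]; have := lamW_lt_one β' W; linarith
      have := entropy_hasDerivAt (lamW β W) (lamW β' W) 1 h0 h1
      rw [e0] at this
      rwa [log_ratio β' W] at this
    have hsum := HasDerivAt.fun_sum key
    have hzero : ∑ W ∈ P, (lamW β' W - lamW β W) * -(∑ k ∈ W, β' k) = 0 := by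
      have : ∀ W ∈ P, (lamW β' W - lamW β W) * -(∑ k ∈ W, β' k)
          = ∑ j ∈ W, -((lamW β' W - lamW β W) * β' j) := by
        intro W _
        rw [mul_neg, Finset.mul_sum, ← Finset.sum_neg_distrib]
      rw [Finset.sum_congr rfl this, sum_swap_filter]
      apply Finset.sum_eq_zero
      intro j _
      simp_rw [sub_mul, neg_sub]
      rw [Finset.sum_sub_distrib, ← Finset.sum_mul, ← Finset.sum_mul, h j, h' j, sub_self]
    rwa [hzero] at hsum
end

section
/- Symmetry under edge-complementation: suppose β* ∈ ℝ^n satisfies ∑_{W ∋ j, |W|=r} λ_W(β*) = d_j for all j. Define β′_j = (1/(n−r)) ∑_{k∈[n]} β*_k − β*_j. Then for every r-subset W, λ_{[n]∖W}(β′) = λ_W(β*), and β′ satisfies the (n−r)-uniform system ∑_{U ∋ j, |U|=n−r} λ_U(β′) = e(d) − d_j for all j, where e(d) = (1/r)∑_{k} d_k = ∑_{|W|=r} λ_W(β*). -/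
theorem stmt15 (n r : ℕ) (hr : 1 ≤ r) (hrn : r ≤ n - 1) (d : Fin n → ℝ)
    (β β' : Fin n → ℝ)
    (hβ : ∀ j : Fin n,
      ∑ W ∈ (Finset.powersetCard r (Finset.univ : Finset (Fin n))).filter (fun W => j ∈ W),
        lamW β W = d j)
    (hβ' : ∀ j : Fin n, β' j = (1 / ((n : ℝ) - r)) * (∑ k : Fin n, β k) - β j) :
    (∀ W : Finset (Fin n), W.card = r →
      lamW β' (Finset.univ \ W) = lamW β W) ∧
    (∀ j : Fin n,
      ∑ U ∈ (Finset.powersetCard (n - r) (Finset.univ : Finset (Fin n))).filter (fun U => j ∈ U),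
        lamW β' U = (1 / (r : ℝ)) * (∑ k : Fin n, d k) - d j) := by
  have hrn' : r + 1 ≤ n := by omega
  have hnr : ((n - r : ℕ) : ℝ) = (n : ℝ) - r := by
    push_cast [Nat.cast_sub (by omega : r ≤ n)]; ring
  have hnr0 : ((n : ℝ) - r) ≠ 0 := by
    rw [← hnr]; exact_mod_cast (by omega : n - r ≠ 0)
  -- key sum lemma
  have key : ∀ W : Finset (Fin n), W.card = r →
      ∑ k ∈ (Finset.univ \ W), β' k = ∑ k ∈ W, β k := by
    intro W hW
    have hcard : (Finset.univ \ W).card = n - r := by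
      rw [Finset.card_sdiff_of_subset (Finset.subset_univ _), hW, Finset.card_univ, Fintype.card_fin]
    calc ∑ k ∈ (Finset.univ \ W), β' k
        = ∑ k ∈ (Finset.univ \ W), ((1 / ((n : ℝ) - r)) * (∑ k : Fin n, β k) - β k) :=
          Finset.sum_congr rfl fun k _ => hβ' k
      _ = ((n - r : ℕ) : ℝ) * ((1 / ((n : ℝ) - r)) * (∑ k : Fin n, β k))
            - ∑ k ∈ (Finset.univ \ W), β k := by
          rw [Finset.sum_sub_distrib, Finset.sum_const, hcard, nsmul_eq_mul]
      _ = (∑ k : Fin n, β k) - ∑ k ∈ (Finset.univ \ W), β k := by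
          rw [hnr]; field_simp
      _ = ∑ k ∈ W, β k := by
          have h := Finset.sum_sdiff (f := β) (Finset.subset_univ W)
          linarith
  have part1 : ∀ W : Finset (Fin n), W.card = r →
      lamW β' (Finset.univ \ W) = lamW β W := by
    intro W hW
    unfold lamW
    rw [key W hW]
  refine ⟨part1, ?_⟩
  set P := Finset.powersetCard r (Finset.univ : Finset (Fin n)) with hP
  have htot : ∑ k : Fin n, d k = r * ∑ W ∈ P, lamW β W := by
    have h1 : ∑ k : Fin n, d k = ∑ j : Fin n, ∑ W ∈ P.filter (fun W => j ∈ W), lamW β W :=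
      Finset.sum_congr rfl fun j _ => (hβ j).symm
    rw [h1]
    have h2 : ∀ j : Fin n, ∑ W ∈ P.filter (fun W => j ∈ W), lamW β W
        = ∑ W ∈ P, if j ∈ W then lamW β W else 0 := fun j => Finset.sum_filter _ _
    simp_rw [h2]
    rw [Finset.sum_comm, Finset.mul_sum]
    refine Finset.sum_congr rfl fun W hW => ?_
    have hWc : W.card = r := (Finset.mem_powersetCard.mp hW).2
    rw [Finset.sum_ite_mem, Finset.univ_inter, Finset.sum_const, hWc, nsmul_eq_mul]
  intro j
  have hbij : ∑ U ∈ (Finset.powersetCard (n - r) (Finset.univ : Finset (Fin n))).filter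
        (fun U => j ∈ U), lamW β' U
      = ∑ W ∈ P.filter (fun W => j ∉ W), lamW β W := by
    refine Finset.sum_nbij' (fun U => Finset.univ \ U) (fun W => Finset.univ \ W) ?_ ?_ ?_ ?_ ?_
    · intro U hU
      obtain ⟨hU1, hU2⟩ := Finset.mem_filter.mp hU
      have hUc : U.card = n - r := (Finset.mem_powersetCard.mp hU1).2
      refine Finset.mem_filter.mpr ⟨Finset.mem_powersetCard.mpr ⟨Finset.subset_univ _, ?_⟩, ?_⟩
      · rw [Finset.card_sdiff_of_subset (Finset.subset_univ _), hUc, Finset.card_univ, Fintype.card_fin]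
        omega
      · simp [hU2]
    · intro W hW
      obtain ⟨hW1, hW2⟩ := Finset.mem_filter.mp hW
      have hWc : W.card = r := (Finset.mem_powersetCard.mp hW1).2
      refine Finset.mem_filter.mpr ⟨Finset.mem_powersetCard.mpr ⟨Finset.subset_univ _, ?_⟩, ?_⟩
      · rw [Finset.card_sdiff_of_subset (Finset.subset_univ _), hWc, Finset.card_univ, Fintype.card_fin]
      · simp [hW2]
    · intro U _; simp [Finset.sdiff_sdiff_self_left]
    · intro W _; simp [Finset.sdiff_sdiff_self_left]
    · intro U hU
      obtain ⟨hU1, _⟩ := Finset.mem_filter.mp hU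
      have hUc : U.card = n - r := (Finset.mem_powersetCard.mp hU1).2
      have hc : (Finset.univ \ U).card = r := by
        rw [Finset.card_sdiff_of_subset (Finset.subset_univ _), hUc, Finset.card_univ, Fintype.card_fin]
        omega
      have := part1 _ hc
      rw [Finset.sdiff_sdiff_self_left, Finset.univ_inter] at this
      exact this
  rw [hbij]
  have hsplit := Finset.sum_filter_add_sum_filter_not P (fun W => j ∈ W) (lamW β)
  have hr0 : (r : ℝ) ≠ 0 := by exact_mod_cast (by omega : r ≠ 0)
  have hT : (1 / (r : ℝ)) * (∑ k : Fin n, d k) = ∑ W ∈ P, lamW β W := by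
    rw [htot]; field_simp
  rw [hT, ← hsplit, hβ j]
  ring
end
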